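/- If N is an integer with φ*(N) dividing N, N ∉ {1, 2, 6, 12, 168, 240}, and N/φ*(N) ≥ 3, then N has at least 8 distinct prime factors. -/

import Mathlib

/-- The unitary totient function: φ*(n) = ∏_{p^e || n} (p^e - 1). -/
def uphi (n : ℕ) : ℕ := ∏ p ∈ n.primeFactors, (p ^ n.factorization p - 1)

private def Nk : ℕ → ℕ
  | 0 => 1 | 1 => 3 | 2 => 15 | 3 => 105 | 4 => 1155 | 5 => 15015 | _ => 255255

private def Dk : ℕ → ℕ
  | 0 => 1 | 1 => 2 | 2 => 8 | 3 => 48 | 4 => 480 | 5 => 5760 | _ => 92160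

private def okk : ℕ → ℕ
  | 0 => 3 | 1 => 3 | 2 => 5 | 3 => 7 | 4 => 11 | 5 => 13 | _ => 17

private lemma key : ∀ k, k ≤ 6 → ∀ S : Finset ℕ, S.card = k →
    (∀ p ∈ S, p.Prime ∧ p ≠ 2) →
    Dk k * ∏ p ∈ S, p ≤ Nk k * ∏ p ∈ S, (p - 1) := by
  intro k
  induction k with
  | zero =>
    intro _ S hc _
    rw [Finset.card_eq_zero] at hc
    subst hc
    simp [Nk, Dk]
  | succ k ih =>
    intro hk S hc hS
    have hk5 : k ≤ 5 := by omega
    have hne : S.Nonempty := Finset.card_pos.mp (by omega)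
    set p := S.max' hne with hp
    have hpS : p ∈ S := S.max'_mem hne
    have hple : ∀ q ∈ S, q ≤ p := fun q hq => S.le_max' q hq
    have hpo : okk (k + 1) ≤ p := by
      by_contra hlt
      push_neg at hlt
      have hsub : S ⊆ Finset.filter (fun q => q.Prime ∧ q ≠ 2) (Finset.range (okk (k + 1))) := by
        intro q hq
        simp only [Finset.mem_filter, Finset.mem_range]
        exact ⟨lt_of_le_of_lt (hple q hq) hlt, hS q hq⟩
      have hcard := Finset.card_le_card hsub
      rw [hc] at hcard
      revert hcard
      interval_cases k <;> decide
    have hS' : ∀ q ∈ S.erase p, q.Prime ∧ q ≠ 2 := fun q hq => hS q (Finset.mem_of_mem_erase hq)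
    have hc' : (S.erase p).card = k := by rw [Finset.card_erase_of_mem hpS, hc]; omega
    have IH := ih (by omega) (S.erase p) hc' hS'
    have hNk : Nk (k + 1) = Nk k * okk (k + 1) := by interval_cases k <;> decide
    have hDk : Dk (k + 1) = Dk k * (okk (k + 1) - 1) := by interval_cases k <;> decide
    have h3o : 3 ≤ okk (k + 1) := by interval_cases k <;> decide
    have hstep : (okk (k + 1) - 1) * p ≤ okk (k + 1) * (p - 1) := by
      have h1 : (1:ℕ) ≤ okk (k + 1) := by omega
      have h1p : (1:ℕ) ≤ p := by omega
      zify [h1, h1p]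
      nlinarith [hpo]
    rw [← Finset.insert_erase hpS, Finset.prod_insert (Finset.notMem_erase p S),
        Finset.prod_insert (Finset.notMem_erase p S), hNk, hDk]
    calc Dk k * (okk (k + 1) - 1) * (p * ∏ q ∈ S.erase p, q)
        = ((okk (k + 1) - 1) * p) * (Dk k * ∏ q ∈ S.erase p, q) := by ring
      _ ≤ (okk (k + 1) * (p - 1)) * (Nk k * ∏ q ∈ S.erase p, (q - 1)) :=
          Nat.mul_le_mul hstep IH
      _ = Nk k * okk (k + 1) * ((p - 1) * ∏ q ∈ S.erase p, (q - 1)) := by ring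

private lemma key2 (k : ℕ) (hk : k ≤ 6) (S : Finset ℕ) (hc : S.card = k)
    (hS : ∀ p ∈ S, p.Prime ∧ p ≠ 2) (f : ℕ → ℕ) (hf : ∀ p ∈ S, 1 ≤ f p) :
    Dk k * ∏ p ∈ S, p ^ f p ≤ Nk k * ∏ p ∈ S, (p ^ f p - 1) := by
  have hpoint : ∀ p ∈ S, (p - 1) * p ^ f p ≤ p * (p ^ f p - 1) := by
    intro p hp
    have hp2 : 2 ≤ p := (hS p hp).1.two_le
    have hf1 := hf p hp
    have hple : p ≤ p ^ f p := Nat.le_self_pow (by omega) p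
    have h1p : (1:ℕ) ≤ p := by omega
    have h1q : (1:ℕ) ≤ p ^ f p := by omega
    zify [h1p, h1q]
    nlinarith
  have hprod : (∏ p ∈ S, (p - 1)) * (∏ p ∈ S, p ^ f p) ≤
      (∏ p ∈ S, p) * (∏ p ∈ S, (p ^ f p - 1)) := by
    rw [← Finset.prod_mul_distrib, ← Finset.prod_mul_distrib]
    exact Finset.prod_le_prod' hpoint
  have hB : 0 < ∏ p ∈ S, (p - 1) := by
    apply Finset.prod_pos
    intro p hp
    have := (hS p hp).1.two_le
    omega
  have hkey := key k hk S hc hS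
  refine Nat.le_of_mul_le_mul_left ?_ hB
  calc (∏ p ∈ S, (p - 1)) * (Dk k * ∏ p ∈ S, p ^ f p)
      = Dk k * ((∏ p ∈ S, (p - 1)) * (∏ p ∈ S, p ^ f p)) := by ring
    _ ≤ Dk k * ((∏ p ∈ S, p) * (∏ p ∈ S, (p ^ f p - 1))) := Nat.mul_le_mul_left _ hprod
    _ = (Dk k * ∏ p ∈ S, p) * (∏ p ∈ S, (p ^ f p - 1)) := by ring
    _ ≤ (Nk k * ∏ p ∈ S, (p - 1)) * (∏ p ∈ S, (p ^ f p - 1)) :=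
        Nat.mul_le_mul_right _ hkey
    _ = (∏ p ∈ S, (p - 1)) * (Nk k * ∏ p ∈ S, (p ^ f p - 1)) := by ring

theorem stmt14 (N : ℕ) (hN : 0 < N) (hdvd : uphi N ∣ N)
    (hne : N ∉ ({1, 2, 6, 12, 168, 240} : Set ℕ))
    (hh : 3 ≤ N / uphi N) :
    8 ≤ N.primeFactors.card := by
  by_contra hcard
  push_neg at hcard
  have hN0 : N ≠ 0 := hN.ne'
  simp only [Set.mem_insert_iff, Set.mem_singleton_iff, not_or] at hne
  obtain ⟨hne1, hne2, hne6, _, _, _⟩ := hne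
  -- exponents positive
  have hfpos : ∀ p ∈ N.primeFactors, 1 ≤ N.factorization p := by
    intro p hp
    rw [← Nat.support_factorization] at hp
    exact Nat.pos_of_ne_zero (Finsupp.mem_support_iff.mp hp)
  -- uphi positive
  have hupos : 0 < uphi N := by
    apply Finset.prod_pos
    intro p hp
    have h2 : 2 ≤ p := (Nat.prime_of_mem_primeFactors hp).two_le
    have hle : 2 ≤ p ^ N.factorization p := by
      calc 2 = 2 ^ 1 := rfl
        _ ≤ p ^ N.factorization p := Nat.pow_le_pow_left h2 1 |>.trans
            (Nat.pow_le_pow_right (by omega) (hfpos p hp))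
    omega
  -- 3 * uphi N ≤ N
  obtain ⟨c, hcN⟩ := hdvd
  have hc3 : 3 ≤ c := by
    have h' : N / uphi N = c := Nat.div_eq_of_eq_mul_right hupos hcN
    rwa [h'] at hh
  have h3 : 3 * uphi N ≤ N := by
    calc 3 * uphi N ≤ c * uphi N := Nat.mul_le_mul_right _ hc3
      _ = uphi N * c := Nat.mul_comm c (uphi N)
      _ = N := hcN.symm
  -- N as product over primeFactors
  have hNprod : N = ∏ p ∈ N.primeFactors, p ^ N.factorization p := by
    conv_lhs => rw [← Nat.factorization_prod_pow_eq_self hN0]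
    rw [Finsupp.prod, Nat.support_factorization]
  by_cases h2mem : 2 ∈ N.primeFactors
  · -- even case
    set e := N.factorization 2 with he
    have he1 : 1 ≤ e := hfpos 2 h2mem
    set S := N.primeFactors.erase 2 with hSdef
    set m := S.card with hm
    have hm6 : m ≤ 6 := by
      rw [hm, hSdef, Finset.card_erase_of_mem h2mem]
      omega
    have hS : ∀ p ∈ S, p.Prime ∧ p ≠ 2 := by
      intro p hp
      exact ⟨Nat.prime_of_mem_primeFactors (Finset.mem_of_mem_erase hp),
        Finset.ne_of_mem_erase hp⟩
    have hfS : ∀ p ∈ S, 1 ≤ N.factorization p :=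
      fun p hp => hfpos p (Finset.mem_of_mem_erase hp)
    set C := ∏ p ∈ S, p ^ N.factorization p with hC
    set E := ∏ p ∈ S, (p ^ N.factorization p - 1) with hE
    have hNsplit : N = 2 ^ e * C := by
      rw [hNprod, ← Finset.mul_prod_erase _ _ h2mem]
    have husplit : uphi N = (2 ^ e - 1) * E := by
      rw [uphi, ← Finset.mul_prod_erase _ _ h2mem]
    have hEpos : 0 < E := by
      apply Finset.prod_pos
      intro p hp
      have h2p : 2 ≤ p := (hS p hp).1.two_le
      have : p ≤ p ^ N.factorization p := Nat.le_self_pow (by have := hfS p hp; omega) p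
      omega
    -- m ≤ e via 2-adic valuation
    have hme : m ≤ e := by
      have hdvd2 : ∀ p ∈ S, 2 ∣ (p ^ N.factorization p - 1) := by
        intro p hp
        have hodd : p % 2 = 1 := Nat.odd_iff.mp ((hS p hp).1.odd_of_ne_two (hS p hp).2)
        have : p ^ N.factorization p % 2 = 1 := by
          rw [Nat.pow_mod, hodd, Nat.one_pow]
        omega
      have hprodvd : (∏ _p ∈ S, 2) ∣ ∏ p ∈ S, (p ^ N.factorization p - 1) :=
        Finset.prod_dvd_prod_of_dvd _ _ hdvd2
      rw [← hE] at hprodvd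
      rw [Finset.prod_const] at hprodvd
      have h2mN : 2 ^ m ∣ N := by
        refine dvd_trans ?_ ⟨c, hcN⟩
        rw [husplit]
        exact Dvd.dvd.mul_left hprodvd _
      exact (Nat.Prime.pow_dvd_iff_le_factorization Nat.prime_two hN0).mp h2mN
    -- main inequality
    have hMain : 3 * ((2 ^ e - 1) * E) ≤ 2 ^ e * C := by
      rw [← husplit, ← hNsplit]; exact h3
    have hkey2 := key2 m hm6 S rfl hS _ hfS
    rw [← hC, ← hE] at hkey2
    have hstar : 3 * Dk m * (2 ^ e - 1) ≤ 2 ^ e * Nk m := by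
      refine Nat.le_of_mul_le_mul_right ?_ hEpos
      calc 3 * Dk m * (2 ^ e - 1) * E = Dk m * (3 * ((2 ^ e - 1) * E)) := by ring
        _ ≤ Dk m * (2 ^ e * C) := Nat.mul_le_mul_left _ hMain
        _ = 2 ^ e * (Dk m * C) := by ring
        _ ≤ 2 ^ e * (Nk m * E) := Nat.mul_le_mul_left _ hkey2
        _ = 2 ^ e * Nk m * E := by ring
    by_cases he5 : 5 ≤ e
    · have ht : 32 ≤ 2 ^ e := by
        calc 32 = 2 ^ 5 := by norm_num
          _ ≤ 2 ^ e := Nat.pow_le_pow_right (by norm_num) he5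
      interval_cases m <;> simp only [Nk, Dk] at hstar <;> omega
    · push_neg at he5
      have he4 : e ≤ 4 := by omega
      -- only (e, m) = (1, 1) survives
      have hem : e = 1 ∧ m = 1 := by
        by_contra hcon
        have hp2e : (2:ℕ) ^ e ≤ 16 := by
          calc (2:ℕ) ^ e ≤ 2 ^ 4 := Nat.pow_le_pow_right (by norm_num) he4
            _ = 16 := by norm_num
        interval_cases e <;> interval_cases m <;>
          simp only [Nk, Dk] at hstar <;> omega
      obtain ⟨hee, hmm⟩ := hem
      obtain ⟨p, hSp⟩ := Finset.card_eq_one.mp hmm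
      have hpS : p ∈ S := by rw [hSp]; exact Finset.mem_singleton_self p
      have hp3 : 3 ≤ p := by
        have := (hS p hpS).1.two_le
        have := (hS p hpS).2
        omega
      have hQ3 : 3 ≤ p ^ N.factorization p := by
        calc 3 ≤ p := hp3
          _ ≤ p ^ N.factorization p := Nat.le_self_pow (by have := hfS p hpS; omega) p
      have hCQ : C = p ^ N.factorization p := by rw [hC, hSp, Finset.prod_singleton]
      have hEQ : E = p ^ N.factorization p - 1 := by rw [hE, hSp, Finset.prod_singleton]
      rw [hee, hCQ, hEQ] at hMain
      norm_num at hMain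
      have hQ : p ^ N.factorization p = 3 := by omega
      have hN6 : N = 6 := by rw [hNsplit, hee, hCQ, hQ]; norm_num
      exact hne6 hN6
  · -- odd case
    rcases Finset.eq_empty_or_nonempty N.primeFactors with hemp | ⟨p, hp⟩
    · have hN1 : N = 1 := by
        rcases (Nat.primeFactors_eq_empty).mp hemp with h | h
        · exact absurd h hN0
        · exact h
      exact hne1 hN1
    · have hpp := Nat.prime_of_mem_primeFactors hp
      have hp2 : p ≠ 2 := fun h => h2mem (h ▸ hp)
      have hodd : p % 2 = 1 := Nat.odd_iff.mp (hpp.odd_of_ne_two hp2)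
      have hQodd : p ^ N.factorization p % 2 = 1 := by
        rw [Nat.pow_mod, hodd, Nat.one_pow]
      have hQ2 : 2 ≤ p ^ N.factorization p := by
        calc 2 ≤ p := hpp.two_le
          _ ≤ p ^ N.factorization p := Nat.le_self_pow (by have := hfpos p hp; omega) p
      have h2d : 2 ∣ (p ^ N.factorization p - 1) := by omega
      have h2N : 2 ∣ N := by
        refine dvd_trans (dvd_trans h2d ?_) ⟨c, hcN⟩
        exact Finset.dvd_prod_of_mem _ hp
      exact h2mem (Nat.mem_primeFactors.mpr ⟨Nat.prime_two, h2N, hN0⟩)
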